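/- Let k be an even positive integer and let G_A be the k×(k+1) antisystematic (A-form) generator matrix over F_2 whose i-th row is (1+e_i, 1), where e_i is the i-th standard basis vector of F_2^k. Then for all real x, y, the input–output weight enumerating function satisfies Σ_{u ∈ F_2^k} x^{wt(u)} y^{wt(u·G_A)} = (1/2)·[(1+xy)^k + (1−xy)^k + y(x+y)^k − y(x−y)^k]. -/

import Mathlib

open Finset

lemma zmod2_cases (a : ZMod 2) : a = 0 ∨ a = 1 := by revert a; decide

lemma sum_zmod2 (c d : ℝ) : ∑ a : ZMod 2, (if a ≠ 0 then c else d) = d + c := by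
  rw [show (univ : Finset (ZMod 2)) = {0, 1} from rfl]
  norm_num

lemma hamming_card_zero (k : ℕ) (u : Fin k → ZMod 2) :
    #(filter (fun i => ¬ u i ≠ 0) univ) = k - hammingNorm u := by
  have := Finset.card_filter_add_card_filter_not
    (s := (univ : Finset (Fin k))) (p := fun i => u i ≠ 0)
  have h2 : hammingNorm u = #(filter (fun i => u i ≠ 0) univ) := rfl
  simp only [Finset.card_univ, Fintype.card_fin] at this
  omega

lemma hamming_prod (k : ℕ) (c d : ℝ) (u : Fin k → ZMod 2) :
    c ^ hammingNorm u * d ^ (k - hammingNorm u)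
      = ∏ i, (if u i ≠ 0 then c else d) := by
  classical
  rw [Finset.prod_ite, Finset.prod_const, Finset.prod_const, hamming_card_zero]
  rfl

lemma sum_pow_hamming (k : ℕ) (c d : ℝ) :
    ∑ u : Fin k → ZMod 2, c ^ hammingNorm u * d ^ (k - hammingNorm u) = (d + c) ^ k := by
  classical
  simp_rw [hamming_prod]
  rw [← Fintype.prod_sum (fun (_ : Fin k) (a : ZMod 2) => if a ≠ 0 then c else d)]
  simp_rw [sum_zmod2]
  simp


lemma zmod2_cases' (a : ZMod 2) : a = 0 ∨ a = 1 := by revert a; decide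

lemma hamming_sum (k : ℕ) (u : Fin k → ZMod 2) :
    (∑ i, u i) = (hammingNorm u : ZMod 2) := by
  have h : hammingNorm u = ∑ i, (if u i ≠ 0 then 1 else 0) := by
    rw [hammingNorm, Finset.card_filter]
  rw [h]
  push_cast
  refine Finset.sum_congr rfl fun i _ => ?_
  rcases zmod2_cases' (u i) with h1 | h1 <;> simp [h1]

lemma vecMul_eval (k : ℕ) (G : Matrix (Fin k) (Fin (k + 1)) (ZMod 2))
    (hG : ∀ (i : Fin k) (j : Fin (k + 1)),
      G i j = if (j : ℕ) = (i : ℕ) then 0 else 1)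
    (u : Fin k → ZMod 2) (j : Fin (k+1)) :
    Matrix.vecMul u G j =
      (hammingNorm u : ZMod 2) + (if h : (j : ℕ) < k then u ⟨j, h⟩ else 0) := by
  classical
  rw [Matrix.vecMul, dotProduct]
  simp only [hG]
  by_cases h : (j : ℕ) < k
  · set b : Fin k := ⟨j, h⟩ with hb
    have he : ∀ i : Fin k, ((j:ℕ) = (i:ℕ)) ↔ (i = b) := by
      intro i
      constructor
      · intro e; exact Fin.ext e.symm
      · intro e; subst e; rfl
    simp_rw [he]
    have h2 : ∀ i : Fin k, u i * (if i = b then 0 else 1)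
        = u i + (if i = b then u i else 0) := by
      intro i
      by_cases hi : i = b
      · rcases zmod2_cases' (u b) with h1 | h1 <;> simp [hi, h1] <;> decide
      · simp [hi]
    simp_rw [h2]
    rw [Finset.sum_add_distrib, Finset.sum_ite_eq' univ b u, hamming_sum]
    simp [h, hb]
  · have he : ∀ i : Fin k, ((j:ℕ) = (i:ℕ)) ↔ False := by
      intro i; simp; omega
    simp_rw [he]
    simp [h, hamming_sum]

lemma norm_vecMul (k : ℕ) (G : Matrix (Fin k) (Fin (k + 1)) (ZMod 2))
    (hG : ∀ (i : Fin k) (j : Fin (k + 1)),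
      G i j = if (j : ℕ) = (i : ℕ) then 0 else 1)
    (u : Fin k → ZMod 2) :
    hammingNorm (Matrix.vecMul u G) =
      if Even (hammingNorm u) then hammingNorm u else k - hammingNorm u + 1 := by
  classical
  have hnorm : hammingNorm (Matrix.vecMul u G)
      = ∑ j : Fin (k+1), (if Matrix.vecMul u G j ≠ 0 then 1 else 0) := by
    rw [hammingNorm, Finset.card_filter]
  rw [hnorm, Fin.sum_univ_castSucc]
  have hcast : ∀ i : Fin k, Matrix.vecMul u G (Fin.castSucc i)
      = (hammingNorm u : ZMod 2) + u i := by
    intro i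
    rw [vecMul_eval k G hG]
    have hlt : ((Fin.castSucc i : Fin (k+1)) : ℕ) < k := i.isLt
    rw [dif_pos hlt]
    congr 1
  have hlast : Matrix.vecMul u G (Fin.last k) = (hammingNorm u : ZMod 2) := by
    rw [vecMul_eval k G hG]
    rw [dif_neg (by simp)]
    simp
  simp only [hcast, hlast]
  by_cases he : Even (hammingNorm u)
  · have h0 : ((hammingNorm u : ZMod 2)) = 0 := ZMod.natCast_eq_zero_iff_even.2 he
    rw [if_pos he]
    simp only [h0, zero_add]
    rw [if_neg (by simp : ¬ (0:ZMod 2) ≠ 0), add_zero, hammingNorm, Finset.card_filter]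
  · have h1 : ((hammingNorm u : ZMod 2)) = 1 :=
      ZMod.natCast_eq_one_iff_odd.2 (Nat.not_even_iff_odd.1 he)
    rw [if_neg he]
    simp only [h1]
    have hterm : ∀ i : Fin k, (if (1 : ZMod 2) + u i ≠ 0 then 1 else 0)
        = (if u i = 0 then 1 else 0) := by
      intro i
      rcases zmod2_cases' (u i) with h2 | h2 <;> simp [h2] <;> decide
    simp only [hterm]
    rw [if_pos (by decide : (1 : ZMod 2) ≠ 0)]
    rw [← Finset.card_filter]
    have := Finset.card_filter_add_card_filter_not
      (s := (univ : Finset (Fin k))) (p := fun i => u i ≠ 0)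
    have h2 : hammingNorm u = #(filter (fun i => u i ≠ 0) univ) := rfl
    have h3 : (filter (fun i => u i = 0) univ) = (filter (fun i => ¬ u i ≠ 0) univ) := by
      simp
    rw [h3]
    simp only [Finset.card_univ, Fintype.card_fin] at this
    omega


/-- For even positive `k`, the IO-WEF of the antisystematic (A-form)
k×(k+1) generator matrix over F_2 (i-th row = (1+e_i, 1), i.e. entry (i,j) is 0
iff j = i) equals `(1/2)[(1+xy)^k + (1−xy)^k + y(x+y)^k − y(x−y)^k]`. -/
theorem spc_antisystematic_iowef (k : ℕ) (hk : 0 < k) (hke : Even k) (x y : ℝ)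
    (G : Matrix (Fin k) (Fin (k + 1)) (ZMod 2))
    (hG : ∀ (i : Fin k) (j : Fin (k + 1)),
      G i j = if (j : ℕ) = (i : ℕ) then 0 else 1) :
    ∑ u : Fin k → ZMod 2, x ^ hammingNorm u * y ^ hammingNorm (Matrix.vecMul u G)
      = (1 / 2) * ((1 + x * y) ^ k + (1 - x * y) ^ k
          + y * (x + y) ^ k - y * (x - y) ^ k) := by
  classical
  have hterm : ∀ u : Fin k → ZMod 2,
      x ^ hammingNorm u * y ^ hammingNorm (Matrix.vecMul u G)
        = (1/2) * ((x*y) ^ hammingNorm u * (1:ℝ) ^ (k - hammingNorm u)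
              + (-(x*y)) ^ hammingNorm u * (1:ℝ) ^ (k - hammingNorm u))
          + (y/2) * (x ^ hammingNorm u * y ^ (k - hammingNorm u)
              - x ^ hammingNorm u * (-y) ^ (k - hammingNorm u)) := by
    intro u
    set n := hammingNorm u with hn
    have hnk : n ≤ k := by
      have h2 : n = #(filter (fun i => u i ≠ 0) univ) := hn
      rw [h2]
      simpa using Finset.card_filter_le (univ : Finset (Fin k)) _
    rw [norm_vecMul k G hG, ← hn]
    by_cases he : Even n
    · rw [if_pos he]
      have h1 : (-(x*y))^n = (x*y)^n := he.neg_pow _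
      have h2 : (-y)^(k-n) = y^(k-n) := by
        have : Even (k - n) := by
          rcases hke with ⟨a, ha⟩; rcases he with ⟨b, hb⟩
          exact ⟨a - b, by omega⟩
        exact this.neg_pow _
      rw [h1, h2, mul_pow]
      ring
    · rw [if_neg he]
      have hon : Odd n := Nat.not_even_iff_odd.1 he
      have h1 : (-(x*y))^n = -((x*y)^n) := hon.neg_pow _
      have hod : Odd (k - n) := by
        rcases hke with ⟨a, ha⟩; rcases hon with ⟨b, hb⟩
        exact ⟨a - b - 1, by omega⟩
      have h2 : (-y)^(k-n) = -(y^(k-n)) := hod.neg_pow _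
      rw [h1, h2, mul_pow, pow_succ]
      ring
  simp_rw [hterm]
  rw [Finset.sum_add_distrib, ← Finset.mul_sum, ← Finset.mul_sum,
    Finset.sum_add_distrib, Finset.sum_sub_distrib,
    sum_pow_hamming, sum_pow_hamming, sum_pow_hamming, sum_pow_hamming]
  ring
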